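/- arXiv:1911.05333 — 7 statements merged into one kernel-verified Lean document; each statement's English description precedes it below -/
import Mathlib

section
/- Let n ≥ 1, let w : ℕ → ℕ → ℝ, and let D : Fin (n+1) → ℝ satisfy the 1D recurrence. Then for every j with 1 ≤ j ≤ n, D j = D 0 + min over all strictly increasing finite sequences 0 = i_0 < i_1 < … < i_k = j (with k ≥ 1, all terms ≤ n) of the sum Σ_{t=0}^{k-1} w i_t i_{t+1}. (The minimum is over a finite nonempty set.) -/
private def Spath (n : ℕ) (w : ℕ → ℕ → ℝ) (j : ℕ) : Set ℝ :=
  {x : ℝ | ∃ k : ℕ, 1 ≤ k ∧ ∃ p : Fin (k+1) → ℕ,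
    StrictMono p ∧ p 0 = 0 ∧ p (Fin.last k) = j ∧ (∀ t, p t ≤ n) ∧
    x = ∑ t : Fin k, w (p t.castSucc) (p t.succ)}

private lemma key (n : ℕ) (w : ℕ → ℕ → ℝ) (D : Fin (n+1) → ℝ)
    (hD : ∀ j : Fin (n+1), 1 ≤ (j : ℕ) →
      IsLeast {x : ℝ | ∃ i : Fin (n+1), i < j ∧ x = D i + w i j} (D j)) :
    ∀ M : ℕ, ∀ j : Fin (n+1), (j : ℕ) ≤ M → 1 ≤ (j : ℕ) →
      IsLeast (Spath n w (j : ℕ)) (D j - D 0) := by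
  intro M
  induction M with
  | zero => intro j hjM hj; omega
  | succ M IH =>
    intro j hjM hj
    constructor
    · -- membership: D j - D 0 is achieved by some path
      obtain ⟨⟨i, hij, hDj⟩, _⟩ := hD j hj
      by_cases hi0 : (i : ℕ) = 0
      · -- direct edge 0 → j
        have hi : i = 0 := Fin.ext hi0
        refine ⟨1, le_refl 1, ![0, (j : ℕ)], ?_, rfl, rfl, ?_, ?_⟩
        · rw [Fin.strictMono_iff_lt_succ]
          intro t
          fin_cases t
          simp; exact Fin.lt_def.mpr (by simp only [Fin.val_zero]; omega)
        · intro t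
          fin_cases t
          · simp
          · simpa using Nat.lt_succ_iff.mp j.isLt
        · rw [Fin.sum_univ_one]
          have : D j = D 0 + w 0 (j : ℕ) := by rw [hDj, hi]; norm_num
          simp [this]
      · -- extend an optimal path to i by the edge i → j
        have hij' : (i : ℕ) < (j : ℕ) := hij
        obtain ⟨⟨k, hk, p, hmono, h0, hlast, hle, hsum⟩, _⟩ :=
          IH i (by omega) (by omega)
        refine ⟨k + 1, by omega, Fin.snoc p (j : ℕ), ?_, ?_, ?_, ?_, ?_⟩
        · rw [Fin.strictMono_iff_lt_succ]
          intro t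
          induction t using Fin.lastCases with
          | last =>
            rw [Fin.succ_last, Fin.snoc_last, Fin.snoc_castSucc, hlast]
            exact hij'
          | cast s =>
            rw [Fin.succ_castSucc, Fin.snoc_castSucc, Fin.snoc_castSucc]
            exact hmono Fin.castSucc_lt_succ
        · have : (0 : Fin (k+2)) = Fin.castSucc 0 := rfl
          rw [this, Fin.snoc_castSucc, h0]
        · rw [Fin.snoc_last]
        · intro t
          induction t using Fin.lastCases with
          | last => rw [Fin.snoc_last]; exact Nat.lt_succ_iff.mp j.isLt
          | cast s => rw [Fin.snoc_castSucc]; exact hle s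
        · rw [Fin.sum_univ_castSucc]
          have hterm : (Fin.snoc p (j : ℕ) : Fin (k+2) → ℕ)
              ((Fin.last k).castSucc) = (i : ℕ) := by
            rw [Fin.snoc_castSucc, hlast]
          have hterm2 : (Fin.snoc p (j : ℕ) : Fin (k+2) → ℕ)
              ((Fin.last k).succ) = (j : ℕ) := by
            rw [Fin.succ_last, Fin.snoc_last]
          rw [hterm, hterm2]
          have hrest : ∀ t : Fin k,
              w ((Fin.snoc p (j : ℕ) : Fin (k+2) → ℕ) (t.castSucc).castSucc)
                ((Fin.snoc p (j : ℕ) : Fin (k+2) → ℕ) (t.castSucc).succ)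
              = w (p t.castSucc) (p t.succ) := by
            intro t
            rw [Fin.succ_castSucc, Fin.snoc_castSucc, Fin.snoc_castSucc]
          rw [Finset.sum_congr rfl (fun t _ => hrest t), ← hsum, hDj]
          ring
    · -- lower bound
      rintro x ⟨k, hk, p, hmono, h0, hlast, hle, hsum⟩
      obtain ⟨m, rfl⟩ : ∃ m, k = m + 1 := ⟨k - 1, by omega⟩
      set iN : ℕ := p ((Fin.last m).castSucc) with hiN
      have hiNle : iN ≤ n := hle _
      have hiNlt : iN < (j : ℕ) := by
        have := hmono (Fin.castSucc_lt_last (Fin.last m))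
        rwa [hlast] at this
      set iF : Fin (n+1) := ⟨iN, by omega⟩ with hiF
      have hijF : iF < j := hiNlt
      have hDle : D j ≤ D iF + w iN (j : ℕ) := (hD j hj).2 ⟨iF, hijF, rfl⟩
      rw [hsum, Fin.sum_univ_castSucc, Fin.succ_last, hlast]
      by_cases hm : m = 0
      · subst hm
        have hi0 : iN = 0 := by
          have : (Fin.last 0).castSucc = (0 : Fin 2) := rfl
          rw [hiN, this, h0]
        have hF0 : iF = 0 := Fin.ext hi0
        rw [hF0] at hDle
        rw [hi0] at hDle
        rw [show p (Fin.last 0).castSucc = 0 from hi0]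
        simp only [Finset.univ_eq_empty, Finset.sum_empty, zero_add]
        linarith
      · have h1 : 1 ≤ iN := by
          have h01 : (0 : Fin (m+2)) < (Fin.last m).castSucc := by
            rw [Fin.lt_def]
            simp
            omega
          have := hmono h01
          rw [h0] at this
          omega
        obtain ⟨_, hLB⟩ := IH iF (by omega) h1
        have hmem : (∑ t : Fin m, w (p (t.castSucc).castSucc) (p (t.castSucc).succ))
            ∈ Spath n w iN := by
          refine ⟨m, by omega, p ∘ Fin.castSucc, hmono.comp Fin.strictMono_castSucc,
            ?_, rfl, fun t => hle _, ?_⟩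
          · simpa using h0
          · refine Finset.sum_congr rfl (fun t _ => ?_)
            simp only [Function.comp]
            rw [Fin.succ_castSucc]
        have := hLB hmem
        linarith

/-- For `D` satisfying the 1D (least-weight-subsequence) recurrence,
`D j - D 0` is the minimum, over all strictly increasing sequences
`0 = i₀ < i₁ < ⋯ < i_k = j` (with `k ≥ 1`, terms `≤ n`), of `∑ w i_t i_{t+1}`. -/
theorem stmt0 (n : ℕ) (hn : 1 ≤ n) (w : ℕ → ℕ → ℝ) (D : Fin (n+1) → ℝ)
    (hD : ∀ j : Fin (n+1), 1 ≤ (j : ℕ) →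
      IsLeast {x : ℝ | ∃ i : Fin (n+1), i < j ∧ x = D i + w i j} (D j)) :
    ∀ j : Fin (n+1), 1 ≤ (j : ℕ) →
      IsLeast {x : ℝ | ∃ k : ℕ, 1 ≤ k ∧ ∃ p : Fin (k+1) → ℕ,
          StrictMono p ∧ p 0 = 0 ∧ p (Fin.last k) = (j : ℕ) ∧ (∀ t, p t ≤ n) ∧
          x = ∑ t : Fin k, w (p t.castSucc) (p t.succ)}
        (D j - D 0) := by
  intro j hj
  exact key n w D hD n j (Nat.lt_succ_iff.mp j.isLt) hj
end

section
/- Let n : ℕ and let H : Matrix (Fin (n+1)) (Fin (n+1)) T satisfy H i i = 1 for all i and H i j = 0 (i.e., +∞) whenever i > j (H is upper triangular with tropical-unit diagonal). Then the tropical powers of H stabilize at exponent n: H^m = H^n for every m ≥ n. (Consequently the closure H* := lim H^m exists and equals H^n.) -/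
open Finset Tropical

private lemma sum_le_apply' {S : Type*} [Fintype S] (f : S → Tropical (WithTop ℝ)) (a : S) :
    (∑ r, f r) ≤ f a := by
  rw [← Tropical.untrop_le_iff, Finset.untrop_sum']
  exact Finset.inf_le (mem_univ a)

private lemma le_sum' {S : Type*} [Fintype S] (f : S → Tropical (WithTop ℝ))
    (x : Tropical (WithTop ℝ)) (h : ∀ a, x ≤ f a) : x ≤ ∑ r, f r := by
  rw [← Tropical.untrop_le_iff, Finset.untrop_sum']
  exact Finset.le_inf fun a _ => Tropical.untrop_le_iff.2 (h a)

private lemma le_zero'' (x : Tropical (WithTop ℝ)) : x ≤ 0 := by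
  rw [← Tropical.untrop_le_iff, Tropical.untrop_zero]; exact le_top

/-- An upper-triangular tropical matrix with tropical-unit diagonal
on `Fin (n+1)` has powers stabilizing at exponent `n`: `H^m = H^n` for `m ≥ n`. -/
theorem stmt3 (n : ℕ)
    (H : Matrix (Fin (n+1)) (Fin (n+1)) (Tropical (WithTop ℝ)))
    (hdiag : ∀ i, H i i = 1)
    (hlow : ∀ i j : Fin (n+1), j < i → H i j = 0) :
    ∀ m : ℕ, n ≤ m → H ^ m = H ^ n := by
  -- key: powers are eventually increasing entrywise
  have key : ∀ k : ℕ, ∀ i j : Fin (n+1), n - (i : ℕ) ≤ k →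
      (H ^ k) i j ≤ (H ^ (k+1)) i j := by
    intro k
    induction k with
    | zero =>
      intro i j h
      have hi : (i : ℕ) = n := by omega
      rw [pow_succ' H 0, Matrix.mul_apply]
      refine le_sum' _ _ fun r => ?_
      rcases lt_trichotomy r i with hr | hr | hr
      · rw [hlow i r hr, zero_mul]; exact le_zero'' _
      · rw [hr, hdiag, one_mul]
      · exfalso
        have hr' : (i : ℕ) < (r : ℕ) := hr
        have := r.isLt
        omega
    | succ k ih =>
      intro i j h
      rw [pow_succ' H (k+1), Matrix.mul_apply]
      refine le_sum' _ _ fun r => ?_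
      rcases lt_trichotomy r i with hr | hr | hr
      · rw [hlow i r hr, zero_mul]; exact le_zero'' _
      · rw [hr, hdiag, one_mul]
      · have h1 : n - (r : ℕ) ≤ k := by
          have : (i : ℕ) < r := hr
          have : (r : ℕ) ≤ n := by omega
          omega
        calc (H ^ (k+1)) i j ≤ H i r * (H ^ k) r j := by
              rw [pow_succ' H k, Matrix.mul_apply]; exact sum_le_apply' _ r
          _ ≤ H i r * (H ^ (k+1)) r j := mul_le_mul_right (ih r j h1) _
  -- decreasing direction
  have dec : ∀ k : ℕ, ∀ i j : Fin (n+1), (H ^ (k+1)) i j ≤ (H ^ k) i j := by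
    intro k i j
    rw [pow_succ' H k, Matrix.mul_apply]
    calc (∑ r, H i r * (H ^ k) r j) ≤ H i i * (H ^ k) i j := sum_le_apply' _ i
      _ = (H ^ k) i j := by rw [hdiag, one_mul]
  have step : ∀ k : ℕ, n ≤ k → H ^ (k+1) = H ^ k := by
    intro k hk
    ext i j
    exact le_antisymm (dec k i j) (key k i j (by omega))
  intro m hm
  induction m with
  | zero =>
    have : n = 0 := by omega
    subst this
    rfl
  | succ m ih =>
    rcases Nat.lt_or_ge n (m+1) with h | h
    · have hnm : n ≤ m := by omega
      rw [step m hnm, ih hnm]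
    · have : m + 1 = n := by omega
      rw [this]
end

section
/- Let n ≥ 1, w : ℕ → ℕ → ℝ, let D : Fin (n+1) → ℝ satisfy the 1D recurrence, and let H be the associated 1D tropical matrix. Then for every j with 1 ≤ j ≤ n, (H^n) 0 j = trop ↑(D j − D 0). That is, solving the 1D recurrence reduces to computing the n-th tropical power (closure) of H: the top row of H^n gives the values D j − D 0. -/
/-- If `D` satisfies the 1D recurrence and `H` is the associated
1D tropical matrix, then the top row of the closure `H^n` gives the values
`D j - D 0`: `(H^n) 0 j = trop (D j - D 0)` for `1 ≤ j ≤ n`. -/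
theorem stmt4 (n : ℕ) (hn : 1 ≤ n) (w : ℕ → ℕ → ℝ) (D : Fin (n+1) → ℝ)
    (hD : ∀ j : Fin (n+1), 1 ≤ (j : ℕ) →
      IsLeast {x : ℝ | ∃ i : Fin (n+1), i < j ∧ x = D i + w i j} (D j))
    (H : Matrix (Fin (n+1)) (Fin (n+1)) (Tropical (WithTop ℝ)))
    (hdiag : ∀ i, H i i = 1)
    (hup : ∀ i j : Fin (n+1), i < j →
      H i j = Tropical.trop ((w i j : ℝ) : WithTop ℝ))
    (hlow : ∀ i j : Fin (n+1), j < i → H i j = 0) :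
    ∀ j : Fin (n+1), 1 ≤ (j : ℕ) →
      (H ^ n) 0 j = Tropical.trop ((D j - D 0 : ℝ) : WithTop ℝ) := by
  -- single-step lower bound
  have hstep : ∀ i j : Fin (n+1),
      ((D j - D i : ℝ) : WithTop ℝ) ≤ Tropical.untrop (H i j) := by
    intro i j
    rcases lt_trichotomy i j with h | h | h
    · rw [hup i j h, Tropical.untrop_trop]
      have hj1 : 1 ≤ (j : ℕ) := by
        have := Fin.lt_iff_val_lt_val.mp h; omega
      have hmem : D i + w i j ∈ {x : ℝ | ∃ i' : Fin (n+1), i' < j ∧ x = D i' + w i' j} :=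
        ⟨i, h, rfl⟩
      have := (hD j hj1).2 hmem
      exact_mod_cast (by linarith : (D j - D i : ℝ) ≤ w i j)
    · subst h; rw [hdiag, Tropical.untrop_one]
      exact_mod_cast le_of_eq (by ring : (D i - D i : ℝ) = 0)
    · rw [hlow i j h, Tropical.untrop_zero]; exact le_top
  -- lower bound for powers
  have hA : ∀ k : ℕ, ∀ i j : Fin (n+1),
      ((D j - D i : ℝ) : WithTop ℝ) ≤ Tropical.untrop ((H ^ k) i j) := by
    intro k
    induction k with
    | zero =>
      intro i j
      simp only [pow_zero, Matrix.one_apply]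
      by_cases h : i = j
      · subst h; simp [Tropical.untrop_one]
      · simp [h, Tropical.untrop_zero]
    | succ k ih =>
      intro i j
      rw [pow_succ, Matrix.mul_apply, Finset.untrop_sum']
      refine Finset.le_inf fun m _ => ?_
      simp only [Function.comp_apply, Tropical.untrop_mul]
      calc ((D j - D i : ℝ) : WithTop ℝ) = ((D m - D i : ℝ) : WithTop ℝ) + ((D j - D m : ℝ) : WithTop ℝ) := by
            rw [← WithTop.coe_add]; norm_cast; ring
        _ ≤ _ := add_le_add (ih i m) (hstep m j)
  -- upper bound
  have hB : ∀ k : ℕ, ∀ j : Fin (n+1), (j : ℕ) ≤ k →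
      Tropical.untrop ((H ^ k) 0 j) ≤ ((D j - D 0 : ℝ) : WithTop ℝ) := by
    intro k
    induction k with
    | zero =>
      intro j hj
      have : j = 0 := by rw [Fin.ext_iff, Fin.val_zero]; omega
      subst this
      simp [pow_zero, Matrix.one_apply, Tropical.untrop_one]
    | succ k ih =>
      intro j hj
      rw [pow_succ, Matrix.mul_apply, Finset.untrop_sum']
      by_cases h0 : 1 ≤ (j : ℕ)
      · obtain ⟨⟨i, hi, hDj⟩, _⟩ := hD j h0
        have hik : (i : ℕ) ≤ k := by
          have := Fin.lt_iff_val_lt_val.mp hi; omega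
        calc Finset.univ.inf (Tropical.untrop ∘ fun m => (H ^ k) 0 m * H m j)
            ≤ Tropical.untrop ((H ^ k) 0 i * H i j) :=
              Finset.inf_le (Finset.mem_univ i)
          _ = Tropical.untrop ((H ^ k) 0 i) + Tropical.untrop (H i j) := Tropical.untrop_mul _ _
          _ ≤ ((D i - D 0 : ℝ) : WithTop ℝ) + ((w i j : ℝ) : WithTop ℝ) := by
              refine add_le_add (ih i hik) ?_
              rw [hup i j hi, Tropical.untrop_trop]
          _ = ((D j - D 0 : ℝ) : WithTop ℝ) := by
              rw [← WithTop.coe_add]; norm_cast; rw [hDj]; ring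
      · have : j = 0 := by rw [Fin.ext_iff, Fin.val_zero]; omega
        subst this
        calc Finset.univ.inf (Tropical.untrop ∘ fun m => (H ^ k) 0 m * H m 0)
            ≤ Tropical.untrop ((H ^ k) 0 0 * H 0 0) :=
              Finset.inf_le (Finset.mem_univ 0)
          _ = Tropical.untrop ((H ^ k) 0 0) + Tropical.untrop (H 0 0) := Tropical.untrop_mul _ _
          _ ≤ ((D 0 - D 0 : ℝ) : WithTop ℝ) + 0 := by
              refine add_le_add (ih 0 (by omega)) ?_
              rw [hdiag, Tropical.untrop_one]
          _ = ((D 0 - D 0 : ℝ) : WithTop ℝ) := add_zero _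
  intro j hj
  have hjn : (j : ℕ) ≤ n := by omega
  have := le_antisymm (hB n j hjn) (hA n 0 j)
  apply Tropical.untrop_injective
  rw [Tropical.untrop_trop, this]
end

section
/- Let n : ℕ and let H : Matrix (Fin (n+1)) (Fin (n+1)) T satisfy H i i = 1 for all i and H i j = 0 (i.e., +∞) whenever i > j. Then for every cut value c : Fin (n+1) and all indices i ≤ c < j, the closure entry satisfies the square-decomposition identity (H^n) i j = Σ_{p ≤ c, q > c} (H^n) i p * (H p q) * (H^n) q j, where Σ is the tropical sum (minimum over all pairs p ≤ c < q) and * is tropical multiplication (real addition). In particular the block of H^n striding the cut is determined by the two triangles (H^n below the cut and above the cut) and the single-edge block of H, i.e., Q* = T₁ Q T₂. -/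
open Finset Tropical

section helpers

variable {α : Type*} {R : Type*} [LinearOrder R] [OrderTop R]

lemma trop_sum_le (s : Finset α) (f : α → Tropical R) {a : α} (ha : a ∈ s) :
    (∑ x ∈ s, f x) ≤ f a := by
  rw [← Tropical.untrop_le_iff, Finset.untrop_sum']
  exact Finset.inf_le ha

lemma trop_le_sum (s : Finset α) (f : α → Tropical R) {x : Tropical R}
    (h : ∀ a ∈ s, x ≤ f a) : x ≤ ∑ a ∈ s, f a := by
  rw [← Tropical.untrop_le_iff, Finset.untrop_sum']
  exact Finset.le_inf fun a ha => Tropical.untrop_le_iff.2 (h a ha)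

lemma trop_sum_le_sum_subset {s t : Finset α} (h : s ⊆ t) (f : α → Tropical R) :
    (∑ x ∈ t, f x) ≤ ∑ x ∈ s, f x := by
  rw [← Tropical.untrop_le_iff, Finset.untrop_sum', Finset.untrop_sum']
  exact Finset.inf_mono h

lemma trop_sum_le_sum (s : Finset α) (f g : α → Tropical R)
    (h : ∀ a ∈ s, f a ≤ g a) : (∑ a ∈ s, f a) ≤ ∑ a ∈ s, g a := by
  rw [← Tropical.untrop_le_iff, Finset.untrop_sum', Finset.untrop_sum']
  exact Finset.inf_mono_fun fun a ha => Tropical.untrop_le_iff.2 (h a ha)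

lemma idem_sum_subset {M : Type*} [AddCommMonoid M] [DecidableEq α]
    (hself : ∀ x : M, x + x = x) {s t : Finset α} (h : s ⊆ t) (f : α → M) :
    (∑ a ∈ s, f a) + ∑ a ∈ t, f a = ∑ a ∈ t, f a := by
  rw [← Finset.sum_sdiff h, add_left_comm, hself]

end helpers

/-- Square decomposition `Q* = T₁ Q T₂` for the closure of an
upper-triangular tropical matrix with unit diagonal: for any cut `c` and
indices `i ≤ c < j`,
`(H^n) i j = Σ_{p ≤ c < q} (H^n) i p * H p q * (H^n) q j` (tropical sum). -/
theorem stmt5 (n : ℕ)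
    (H : Matrix (Fin (n+1)) (Fin (n+1)) (Tropical (WithTop ℝ)))
    (hdiag : ∀ i, H i i = 1)
    (hlow : ∀ i j : Fin (n+1), j < i → H i j = 0)
    (c : Fin (n+1)) (i j : Fin (n+1)) (hic : i ≤ c) (hcj : c < j) :
    (H ^ n) i j =
      ∑ pq ∈ Finset.univ.filter
          (fun pq : Fin (n+1) × Fin (n+1) => pq.1 ≤ c ∧ c < pq.2),
        (H ^ n) i pq.1 * H pq.1 pq.2 * (H ^ n) pq.2 j := by
  set N : Matrix (Fin (n+1)) (Fin (n+1)) (Tropical (WithTop ℝ)) :=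
    Matrix.of (fun a b => if a < b then H a b else 0) with hN
  have matrix_add_self :
      ∀ A : Matrix (Fin (n+1)) (Fin (n+1)) (Tropical (WithTop ℝ)), A + A = A := by
    intro A; ext a b; exact Tropical.add_self (A a b)
  have hHN : H = 1 + N := by
    ext a b
    rcases lt_trichotomy a b with hab | hab | hab
    · simp [hN, Matrix.add_apply, Matrix.one_apply_ne hab.ne, hab]
    · subst hab
      simp [hN, Matrix.add_apply, Matrix.one_apply_eq, hdiag a, lt_irrefl]
    · simp [hN, Matrix.add_apply, Matrix.one_apply_ne hab.ne', not_lt.2 hab.le, hlow a b hab]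
  have hNpow : ∀ m (a b : Fin (n+1)), (b : ℕ) < (a : ℕ) + m → (N ^ m) a b = 0 := by
    intro m
    induction m with
    | zero =>
      intro a b hb
      rw [pow_zero, Matrix.one_apply_ne]
      intro h; subst h; omega
    | succ m IH =>
      intro a b hb
      rw [pow_succ, Matrix.mul_apply]
      apply Finset.sum_eq_zero
      intro k _
      by_cases hk : (k : ℕ) < (a : ℕ) + m
      · rw [IH a k hk, zero_mul]
      · have : ¬ k < b := by rw [Fin.lt_def]; omega
        have : N k b = 0 := by simp [hN, this]
        rw [this, mul_zero]
  have hpow_sum : ∀ m, H ^ m = ∑ k ∈ Finset.range (m+1), N ^ k := by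
    intro m
    induction m with
    | zero => simp
    | succ m IH =>
      rw [pow_succ, IH, hHN, mul_add, mul_one, Finset.sum_mul]
      have hre : ∀ k, N ^ k * N = N ^ (k+1) := fun k => (pow_succ N k).symm
      simp only [hre]
      rw [Finset.sum_range_succ (fun k => N ^ (k+1)) m,
          Finset.sum_range_succ (fun k => N ^ k) (m+1)]
      have hBA : (∑ k ∈ Finset.range m, N ^ (k+1)) + ∑ k ∈ Finset.range (m+1), N ^ k
          = ∑ k ∈ Finset.range (m+1), N ^ k := by
        have himg : (∑ k ∈ Finset.range m, N ^ (k+1))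
            = ∑ k ∈ (Finset.range m).image (· + 1), N ^ k := by
          rw [Finset.sum_image]
          intro x _ y _ h; simp only at h; omega
        rw [himg]
        apply idem_sum_subset matrix_add_self
        intro x hx
        simp only [Finset.mem_image, Finset.mem_range] at hx ⊢
        obtain ⟨k, hk, rfl⟩ := hx; omega
      rw [← add_assoc, add_comm (∑ k ∈ Finset.range (m+1), N ^ k), hBA]
  have hNzero : ∀ k, n + 1 ≤ k →
      (N ^ k : Matrix (Fin (n+1)) (Fin (n+1)) (Tropical (WithTop ℝ))) = 0 := by
    intro k hk
    ext a b
    rw [hNpow k a b (by omega), Matrix.zero_apply]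
  have hstab : ∀ m, n ≤ m → H ^ m = H ^ n := by
    intro m hm
    rw [hpow_sum m, hpow_sum n]
    refine (Finset.sum_subset (Finset.range_subset_range.2 (by omega)) ?_).symm
    intro k hk hk'
    simp only [Finset.mem_range] at hk hk'
    exact hNzero k (by omega)
  have hle : ∀ m (a b : Fin (n+1)), (H ^ n) a b ≤ (H ^ m) a b := by
    intro m a b
    rcases le_total n m with h | h
    · rw [hstab m h]
    · rw [hpow_sum n, hpow_sum m, Matrix.sum_apply, Matrix.sum_apply]
      exact trop_sum_le_sum_subset (Finset.range_subset_range.2 (by omega)) _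
  have hdiagpow : ∀ m (a : Fin (n+1)), (H ^ m) a a = 1 := by
    intro m a
    rw [hpow_sum m, Matrix.sum_apply]
    rw [Finset.sum_eq_single 0]
    · rw [pow_zero, Matrix.one_apply_eq]
    · intro k _ hk
      exact hNpow k a a (by omega)
    · intro h; exact absurd (Finset.mem_range.2 (by omega)) h
  have hchain : ∀ (a k b : Fin (n+1)), (H ^ n) a b ≤ (H ^ n) a k * H k b := by
    intro a k b
    have h1 : (H ^ (n+1)) a b ≤ (H ^ n) a k * H k b := by
      rw [pow_succ, Matrix.mul_apply]
      exact trop_sum_le _ _ (Finset.mem_univ k)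
    rwa [hstab (n+1) (Nat.le_succ n)] at h1
  -- the hard direction, by induction on the power
  have key : ∀ m, ∀ a b : Fin (n+1), a ≤ c → c < b →
      (∑ pq ∈ Finset.univ.filter
          (fun pq : Fin (n+1) × Fin (n+1) => pq.1 ≤ c ∧ c < pq.2),
        (H ^ n) a pq.1 * H pq.1 pq.2 * (H ^ n) pq.2 b) ≤ (H ^ m) a b := by
    intro m
    induction m with
    | zero =>
      intro a b hac hcb
      rw [pow_zero, Matrix.one_apply_ne (by intro h; subst h; exact absurd hcb (not_lt.2 hac))]
      exact Tropical.le_zero _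
    | succ m IH =>
      intro a b hac hcb
      rw [pow_succ, Matrix.mul_apply]
      apply trop_le_sum
      intro k _
      by_cases hk : c < k
      · calc
          (∑ pq ∈ Finset.univ.filter
              (fun pq : Fin (n+1) × Fin (n+1) => pq.1 ≤ c ∧ c < pq.2),
            (H ^ n) a pq.1 * H pq.1 pq.2 * (H ^ n) pq.2 b)
              ≤ ∑ pq ∈ Finset.univ.filter
                  (fun pq : Fin (n+1) × Fin (n+1) => pq.1 ≤ c ∧ c < pq.2),
                (H ^ n) a pq.1 * H pq.1 pq.2 * (H ^ n) pq.2 k * H k b := by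
            apply trop_sum_le_sum
            intro pq _
            rw [mul_assoc ((H ^ n) a pq.1 * H pq.1 pq.2)]
            exact mul_le_mul_right (hchain pq.2 k b) _
          _ = (∑ pq ∈ Finset.univ.filter
                  (fun pq : Fin (n+1) × Fin (n+1) => pq.1 ≤ c ∧ c < pq.2),
                (H ^ n) a pq.1 * H pq.1 pq.2 * (H ^ n) pq.2 k) * H k b := by
            rw [Finset.sum_mul]
          _ ≤ (H ^ m) a k * H k b := mul_le_mul_left (IH a k hac hk) _
      · push_neg at hk
        calc
          (∑ pq ∈ Finset.univ.filter
              (fun pq : Fin (n+1) × Fin (n+1) => pq.1 ≤ c ∧ c < pq.2),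
            (H ^ n) a pq.1 * H pq.1 pq.2 * (H ^ n) pq.2 b)
              ≤ (H ^ n) a k * H k b * (H ^ n) b b := by
            have hmem : ((k, b) : Fin (n+1) × Fin (n+1)) ∈ Finset.univ.filter
                (fun pq : Fin (n+1) × Fin (n+1) => pq.1 ≤ c ∧ c < pq.2) := by
              simp [hk, hcb]
            exact trop_sum_le _ _ hmem
          _ = (H ^ n) a k * H k b := by rw [hdiagpow, mul_one]
          _ ≤ (H ^ m) a k * H k b := mul_le_mul_left (hle m a k) _
  -- the easy direction: expand (H^n) i j as a full double sum
  have expand : (H ^ n) i j = ∑ pq ∈ (Finset.univ : Finset (Fin (n+1) × Fin (n+1))),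
      (H ^ n) i pq.1 * H pq.1 pq.2 * (H ^ n) pq.2 j := by
    have h1 : H ^ n = H ^ n * H * H ^ n := by
      rw [← pow_succ, ← pow_add]
      exact (hstab (n + 1 + n) (by omega)).symm
    conv_lhs => rw [h1]
    rw [Matrix.mul_apply]
    rw [← Finset.univ_product_univ, Finset.sum_product_right]
    apply Finset.sum_congr rfl
    intro q _
    rw [Matrix.mul_apply, Finset.sum_mul]
  refine le_antisymm ?_ (key n i j hic hcj)
  rw [expand]
  exact trop_sum_le_sum_subset (Finset.filter_subset _ _) _
end

section
/- Let m, n ≥ 1, let w, w', s : ℕ → ℕ → ℝ, and let D : Fin (m+1) → Fin (n+1) → ℝ satisfy the GAP recurrence. Then for every i ≤ m and j ≤ n, D i j equals the minimum, over all GAP paths from (0,0) to (i,j), of the weight of the path. (The set of GAP paths to any reachable cell (i,j) is finite and nonempty, so the minimum exists.) -/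
/-- A single step of a GAP path: a diagonal step `(p,q) → (p+1,q+1)`,
a horizontal step `(p,q) → (p,q')` with `q < q'`, or a vertical step
`(p,q) → (p',q)` with `p < p'`. -/
def IsGapStep (u v : ℕ × ℕ) : Prop :=
  (v.1 = u.1 + 1 ∧ v.2 = u.2 + 1) ∨ (v.1 = u.1 ∧ u.2 < v.2) ∨
    (v.2 = u.2 ∧ u.1 < v.1)

/-- The weight of a GAP step: `s p' q'` for a diagonal step to `(p',q')`,
`w q q'` for a horizontal step, and `w' p p'` for a vertical step. -/
def gapStepWeight (w w' s : ℕ → ℕ → ℝ) (u v : ℕ × ℕ) : ℝ :=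
  if v.1 = u.1 + 1 ∧ v.2 = u.2 + 1 then s v.1 v.2
  else if v.1 = u.1 then w u.2 v.2
  else w' u.1 v.1

lemma gapStep_mono {u v : ℕ × ℕ} (h : IsGapStep u v) :
    u.1 ≤ v.1 ∧ u.2 ≤ v.2 ∧ u.1 + u.2 < v.1 + v.2 := by
  rcases h with ⟨h1, h2⟩ | ⟨h1, h2⟩ | ⟨h1, h2⟩ <;> omega

lemma weight_diag (w w' s : ℕ → ℕ → ℝ) (p q : ℕ) :
    gapStepWeight w w' s (p, q) (p + 1, q + 1) = s (p + 1) (q + 1) := by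
  unfold gapStepWeight
  rw [if_pos ⟨rfl, rfl⟩]

lemma weight_horiz (w w' s : ℕ → ℕ → ℝ) (p q q' : ℕ) :
    gapStepWeight w w' s (p, q) (p, q') = w q q' := by
  unfold gapStepWeight
  rw [if_neg (by omega), if_pos rfl]

lemma weight_vert (w w' s : ℕ → ℕ → ℝ) (p q p' : ℕ) (h : p < p') :
    gapStepWeight w w' s (p, q) (p', q) = w' p p' := by
  unfold gapStepWeight
  rw [if_neg (by omega), if_neg (by omega)]

/-- extend a path by one step -/
lemma gap_snoc_path (w w' s : ℕ → ℕ → ℝ) {k : ℕ} {v' : Fin (k+1) → ℕ × ℕ} {e : ℕ × ℕ}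
    (h0 : v' 0 = (0, 0)) (hstep : ∀ t : Fin k, IsGapStep (v' t.castSucc) (v' t.succ))
    (he : IsGapStep (v' (Fin.last k)) e) :
    ∃ vv : Fin (k+2) → ℕ × ℕ, vv 0 = (0, 0) ∧ vv (Fin.last (k+1)) = e ∧
      (∀ t : Fin (k+1), IsGapStep (vv t.castSucc) (vv t.succ)) ∧
      ∑ t : Fin (k+1), gapStepWeight w w' s (vv t.castSucc) (vv t.succ)
        = (∑ t : Fin k, gapStepWeight w w' s (v' t.castSucc) (v' t.succ))
          + gapStepWeight w w' s (v' (Fin.last k)) e := by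
  refine ⟨Fin.snoc v' e, ?_, ?_, ?_, ?_⟩
  · rw [← Fin.castSucc_zero, Fin.snoc_castSucc, h0]
  · rw [Fin.snoc_last]
  · intro t
    refine Fin.lastCases ?_ ?_ t
    · rw [Fin.succ_last, Fin.snoc_castSucc, Fin.snoc_last]
      exact he
    · intro t'
      rw [Fin.succ_castSucc, Fin.snoc_castSucc, Fin.snoc_castSucc]
      exact hstep t'
  · rw [Fin.sum_univ_castSucc]
    congr 1
    · refine Finset.sum_congr rfl fun t _ => ?_
      rw [Fin.succ_castSucc, Fin.snoc_castSucc, Fin.snoc_castSucc]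
    · rw [Fin.succ_last, Fin.snoc_castSucc, Fin.snoc_last]

/-- If `D` satisfies the GAP recurrence, then `D i j` is the
minimum, over all GAP paths from `(0,0)` to `(i,j)`, of the weight of the
path (the sum of its step weights). -/
theorem stmt7 (m n : ℕ) (hm : 1 ≤ m) (hn : 1 ≤ n) (w w' s : ℕ → ℕ → ℝ)
    (D : Fin (m+1) → Fin (n+1) → ℝ)
    (hD0 : D 0 0 = 0)
    (hD : ∀ (i : Fin (m+1)) (j : Fin (n+1)), ¬(i = 0 ∧ j = 0) →
      IsLeast {x : ℝ |
        (∃ (i' : Fin (m+1)) (j' : Fin (n+1)),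
          (i' : ℕ) + 1 = (i : ℕ) ∧ (j' : ℕ) + 1 = (j : ℕ) ∧
          x = D i' j' + s i j) ∨
        (∃ q : Fin (n+1), q < j ∧ x = D i q + w q j) ∨
        (∃ p : Fin (m+1), p < i ∧ x = D p j + w' p i)} (D i j)) :
    ∀ (i : Fin (m+1)) (j : Fin (n+1)),
      IsLeast {x : ℝ | ∃ k : ℕ, ∃ v : Fin (k+1) → ℕ × ℕ,
        v 0 = (0, 0) ∧ v (Fin.last k) = ((i : ℕ), (j : ℕ)) ∧
        (∀ t : Fin k, IsGapStep (v t.castSucc) (v t.succ)) ∧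
        x = ∑ t : Fin k, gapStepWeight w w' s (v t.castSucc) (v t.succ)}
      (D i j) := by
  -- Lower bound: D i j ≤ weight of any path, by induction on path length
  have lb : ∀ (k : ℕ) (i : Fin (m+1)) (j : Fin (n+1)) (v : Fin (k+1) → ℕ × ℕ),
      v 0 = (0, 0) → v (Fin.last k) = ((i : ℕ), (j : ℕ)) →
      (∀ t : Fin k, IsGapStep (v t.castSucc) (v t.succ)) →
      D i j ≤ ∑ t : Fin k, gapStepWeight w w' s (v t.castSucc) (v t.succ) := by
    intro k
    induction k with
    | zero =>
      intro i j v h0 hl _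
      have hll : Fin.last 0 = (0 : Fin 1) := rfl
      rw [hll, h0] at hl
      have hi : (i : ℕ) = 0 := by
        have := congrArg Prod.fst hl; simpa using this.symm
      have hj : (j : ℕ) = 0 := by
        have := congrArg Prod.snd hl; simpa using this.symm
      have hi' : i = 0 := Fin.ext (by simpa using hi)
      have hj' : j = 0 := Fin.ext (by simpa using hj)
      simp [hi', hj', hD0]
    | succ k ih =>
      intro i j v h0 hl hs
      have hlast := hs (Fin.last k)
      rw [Fin.succ_last, hl] at hlast
      obtain ⟨p, q, hpq⟩ : ∃ p q, v ((Fin.last k).castSucc) = (p, q) := ⟨_, _, rfl⟩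
      rw [hpq] at hlast
      obtain ⟨hle1, hle2, hlt⟩ := gapStep_mono hlast
      simp only [Prod.fst, Prod.snd] at hle1 hle2 hlt
      have hle1 : p ≤ (i : ℕ) := hle1
      have hle2 : q ≤ (j : ℕ) := hle2
      have hlt : p + q < (i : ℕ) + (j : ℕ) := hlt
      have him : (i : ℕ) < m + 1 := i.isLt
      have hjn : (j : ℕ) < n + 1 := j.isLt
      have ham : p < m + 1 := by omega
      have hbn : q < n + 1 := by omega
      set a : Fin (m+1) := ⟨p, ham⟩ with hadef
      set b : Fin (n+1) := ⟨q, hbn⟩ with hbdef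
      have hpre : D a b ≤
          ∑ t : Fin k, gapStepWeight w w' s (v t.castSucc.castSucc) (v (t.castSucc).succ) := by
        have h := ih a b (fun t => v t.castSucc) (by simpa using h0)
          (by simpa using hpq) (fun t => by
            simpa only [Fin.succ_castSucc] using hs t.castSucc)
        simpa only [Fin.succ_castSucc] using h
      have hne : ¬(i = 0 ∧ j = 0) := by
        rintro ⟨rfl, rfl⟩
        simp only [Fin.val_zero] at hlt
        omega
      have hmem : D a b + gapStepWeight w w' s (p, q) ((i : ℕ), (j : ℕ)) ∈
          {x : ℝ |
            (∃ (i' : Fin (m+1)) (j' : Fin (n+1)),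
              (i' : ℕ) + 1 = (i : ℕ) ∧ (j' : ℕ) + 1 = (j : ℕ) ∧
              x = D i' j' + s i j) ∨
            (∃ q' : Fin (n+1), q' < j ∧ x = D i q' + w q' j) ∨
            (∃ p' : Fin (m+1), p' < i ∧ x = D p' j + w' p' i)} := by
        rcases hlast with ⟨h1, h2⟩ | ⟨h1, h2⟩ | ⟨h1, h2⟩
        · have h1 : (i : ℕ) = p + 1 := h1
          have h2 : (j : ℕ) = q + 1 := h2
          left
          refine ⟨a, b, by show p + 1 = (i : ℕ); omega,
            by show q + 1 = (j : ℕ); omega, ?_⟩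
          rw [h1, h2, weight_diag]
        · have h1 : (i : ℕ) = p := h1
          have h2 : q < (j : ℕ) := h2
          right; left
          have hai : a = i := Fin.ext (show p = (i : ℕ) from h1.symm)
          refine ⟨b, Fin.lt_def.mpr (show (b : ℕ) < (j : ℕ) from h2), ?_⟩
          rw [h1, weight_horiz, ← hai]
        · have h1 : (j : ℕ) = q := h1
          have h2 : p < (i : ℕ) := h2
          right; right
          have hbj : b = j := Fin.ext (show q = (j : ℕ) from h1.symm)
          refine ⟨a, Fin.lt_def.mpr (show (a : ℕ) < (i : ℕ) from h2), ?_⟩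
          rw [h1, weight_vert w w' s p q _ h2, ← hbj]
      have hDij := (hD i j hne).2 hmem
      have hsum : ∑ t : Fin (k+1), gapStepWeight w w' s (v t.castSucc) (v t.succ)
          = (∑ t : Fin k, gapStepWeight w w' s (v t.castSucc.castSucc) (v (t.castSucc).succ))
            + gapStepWeight w w' s (p, q) ((i : ℕ), (j : ℕ)) := by
        rw [Fin.sum_univ_castSucc]
        congr 1
        rw [Fin.succ_last, hl, hpq]
      rw [hsum]
      linarith
  -- Membership: strong induction on i + j
  have mem : ∀ (N : ℕ) (i : Fin (m+1)) (j : Fin (n+1)), (i : ℕ) + (j : ℕ) ≤ N →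
      ∃ k : ℕ, ∃ v : Fin (k+1) → ℕ × ℕ,
        v 0 = (0, 0) ∧ v (Fin.last k) = ((i : ℕ), (j : ℕ)) ∧
        (∀ t : Fin k, IsGapStep (v t.castSucc) (v t.succ)) ∧
        D i j = ∑ t : Fin k, gapStepWeight w w' s (v t.castSucc) (v t.succ) := by
    intro N
    induction N with
    | zero =>
      intro i j hij
      have hi : i = 0 := by
        apply Fin.ext; simp only [Fin.val_zero]; omega
      have hj : j = 0 := by
        apply Fin.ext; simp only [Fin.val_zero]; omega
      subst hi; subst hj
      refine ⟨0, fun _ => (0, 0), rfl, ?_, fun t => t.elim0, by simp [hD0]⟩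
      simp
    | succ N ihN =>
      intro i j hij
      by_cases hle : (i : ℕ) + (j : ℕ) ≤ N
      · exact ihN i j hle
      have hpos : 0 < (i : ℕ) + (j : ℕ) := by omega
      have hne : ¬(i = 0 ∧ j = 0) := by
        rintro ⟨rfl, rfl⟩
        simp only [Fin.val_zero] at hpos
        omega
      rcases (hD i j hne).1 with ⟨a, b, ha, hb, hx⟩ | ⟨q, hq, hx⟩ | ⟨p, hp, hx⟩
      · obtain ⟨k, v', h0, hl, hstep, hw⟩ := ihN a b (by omega)
        have he : IsGapStep (v' (Fin.last k)) ((i : ℕ), (j : ℕ)) := by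
          rw [hl]
          exact Or.inl ⟨(show (i : ℕ) = (a : ℕ) + 1 by omega),
            (show (j : ℕ) = (b : ℕ) + 1 by omega)⟩
        obtain ⟨vv, H0, HL, HS, HW⟩ := gap_snoc_path w w' s h0 hstep he
        refine ⟨k + 1, vv, H0, HL, HS, ?_⟩
        rw [HW, ← hw, hx, hl]
        have hd : gapStepWeight w w' s ((a : ℕ), (b : ℕ)) ((i : ℕ), (j : ℕ))
            = s (i : ℕ) (j : ℕ) := by
          rw [show (((i : ℕ), (j : ℕ)) : ℕ × ℕ) = ((a : ℕ) + 1, (b : ℕ) + 1) by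
            rw [ha, hb], weight_diag, ha, hb]
        rw [hd]
      · have hqj : (q : ℕ) < (j : ℕ) := hq
        obtain ⟨k, v', h0, hl, hstep, hw⟩ := ihN i q (by omega)
        have he : IsGapStep (v' (Fin.last k)) ((i : ℕ), (j : ℕ)) := by
          rw [hl]
          exact Or.inr (Or.inl ⟨rfl, hqj⟩)
        obtain ⟨vv, H0, HL, HS, HW⟩ := gap_snoc_path w w' s h0 hstep he
        refine ⟨k + 1, vv, H0, HL, HS, ?_⟩
        rw [HW, ← hw, hx, hl, weight_horiz]
      · have hpi : (p : ℕ) < (i : ℕ) := hp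
        obtain ⟨k, v', h0, hl, hstep, hw⟩ := ihN p j (by omega)
        have he : IsGapStep (v' (Fin.last k)) ((i : ℕ), (j : ℕ)) := by
          rw [hl]
          exact Or.inr (Or.inr ⟨rfl, hpi⟩)
        obtain ⟨vv, H0, HL, HS, HW⟩ := gap_snoc_path w w' s h0 hstep he
        refine ⟨k + 1, vv, H0, HL, HS, ?_⟩
        rw [HW, ← hw, hx, hl, weight_vert w w' s _ _ _ hpi]
  intro i j
  constructor
  · obtain ⟨k, v, h0, hl, hs', hw⟩ := mem ((i : ℕ) + (j : ℕ)) i j le_rfl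
    exact ⟨k, v, h0, hl, hs', hw⟩
  · rintro x ⟨k, v, h0, hl, hs', rfl⟩
    exact lb k i j v h0 hl hs'
end

section
/- Let m, n : ℕ and let H : Matrix (Fin (m+1) × Fin (n+1)) (Fin (m+1) × Fin (n+1)) T be GAP-structured. Then the tropical powers of H stabilize at exponent L := min m n, i.e., H^k = H^L for every k ≥ L. (Hence the closure H* exists and equals H^{min m n}.) -/
/-- The tropical powers of a GAP-structured matrix over
`Fin (m+1) × Fin (n+1)` stabilize at exponent `min m n`. -/
theorem stmt8 (m n : ℕ)
    (H : Matrix (Fin (m+1) × Fin (n+1)) (Fin (m+1) × Fin (n+1))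
      (Tropical (WithTop ℝ)))
    (hdiag : ∀ z, H z z = 1)
    (hoff : ∀ u v : Fin (m+1) × Fin (n+1), u ≠ v →
      ¬(u.1 < v.1 ∧ u.2 < v.2) → H u v = 0) :
    ∀ k : ℕ, min m n ≤ k → H ^ k = H ^ (min m n) := by
  set L := min m n with hL
  set N : Matrix (Fin (m+1) × Fin (n+1)) (Fin (m+1) × Fin (n+1)) (Tropical (WithTop ℝ)) :=
    fun u v => if u = v then 0 else H u v with hN
  have hHN : H = 1 + N := by
    ext u v
    by_cases h : u = v
    · subst h
      simp only [Matrix.add_apply]; simp [Matrix.one_apply, hN, hdiag]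
    · simp only [Matrix.add_apply]; simp [Matrix.one_apply_ne h, hN, h]
  have hNzero : ∀ u v, N u v ≠ 0 → u.1 < v.1 ∧ u.2 < v.2 := by
    intro u v h
    by_contra hc
    apply h
    by_cases he : u = v
    · simp [hN, he]
    · simp [hN, he, hoff u v he hc]
  have hmul : ∀ a b : Tropical (WithTop ℝ), a * b ≠ 0 → a ≠ 0 ∧ b ≠ 0 := by
    intro a b h
    constructor <;> rintro rfl <;> simp at h
  have hpow : ∀ i (u v : Fin (m+1) × Fin (n+1)), (N ^ i) u v ≠ 0 →
      (u.1 : ℕ) + i ≤ v.1 ∧ (u.2 : ℕ) + i ≤ v.2 := by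
    intro i
    induction i with
    | zero =>
      intro u v h
      rcases eq_or_ne u v with rfl | hne
      · simp
      · exfalso; apply h; simp [Matrix.one_apply_ne hne]
    | succ i ih =>
      intro u v h
      rw [pow_succ', Matrix.mul_apply] at h
      have hex : ∃ r, N u r * (N ^ i) r v ≠ 0 := by
        by_contra hall
        push_neg at hall
        exact h (Finset.sum_eq_zero fun r _ => hall r)
      obtain ⟨r, hr⟩ := hex
      obtain ⟨h1, h2⟩ := hmul _ _ hr
      obtain ⟨hu1, hu2⟩ := hNzero u r h1
      obtain ⟨hr1, hr2⟩ := ih r v h2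
      have hu1' : (u.1 : ℕ) < r.1 := hu1
      have hu2' : (u.2 : ℕ) < r.2 := hu2
      constructor <;> omega
  have hNL : ∀ i, L + 1 ≤ i → N ^ i = 0 := by
    intro i hi
    ext u v
    rw [Matrix.zero_apply]
    by_contra h
    obtain ⟨h1, h2⟩ := hpow i u v h
    have hv1 : (v.1 : ℕ) ≤ m := Fin.is_le _
    have hv2 : (v.2 : ℕ) ≤ n := Fin.is_le _
    omega
  have hadd : ∀ A : Matrix (Fin (m+1) × Fin (n+1)) (Fin (m+1) × Fin (n+1)) (Tropical (WithTop ℝ)),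
      A + A = A := by
    intro A; ext u v; rw [Matrix.add_apply]; exact Tropical.add_self _
  have hsmul : ∀ (c : ℕ), 1 ≤ c →
      ∀ A : Matrix (Fin (m+1) × Fin (n+1)) (Fin (m+1) × Fin (n+1)) (Tropical (WithTop ℝ)),
      c • A = A := by
    intro c hc
    induction c with
    | zero => omega
    | succ c ih =>
      intro A
      rcases Nat.eq_zero_or_pos c with rfl | hc'
      · simp
      · rw [succ_nsmul, ih hc', hadd]
  have hsum : ∀ k, H ^ k = ∑ j ∈ Finset.range (k + 1), N ^ j := by
    intro k
    rw [hHN, (Commute.one_left N).add_pow]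
    rw [← Finset.sum_range_reflect (fun j => N ^ j) (k + 1)]
    apply Finset.sum_congr rfl
    intro j hj
    rw [Finset.mem_range] at hj
    have hjk : j ≤ k := Nat.lt_succ_iff.mp hj
    rw [one_pow, one_mul, ← (Nat.cast_commute (k.choose j) (N ^ (k - j))).eq,
      ← nsmul_eq_mul, hsmul _ (Nat.choose_pos hjk) _]
    simp
  intro k hk
  rw [hsum k, hsum L]
  symm
  apply Finset.sum_subset
  · exact Finset.range_subset_range.mpr (by omega)
  · intro j hj hj2
    rw [Finset.mem_range] at hj hj2
    exact hNL j (by omega)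
end

section
/- Let m, n : ℕ, let H : Matrix (Fin (m+1) × Fin (n+1)) (Fin (m+1) × Fin (n+1)) T be GAP-structured, and set L := min m n. Then for every cut value c : Fin (n+1) and all indices u = (i₀,j₀), v = (i₁,j₁) with j₀ ≤ c < j₁, the closure entry satisfies the 2D square-decomposition identity (H^L) u v = Σ_{p, q : p.2 ≤ c < q.2} (H^L) u p * (H p q) * (H^L) q v, where Σ is the tropical sum (minimum over all pairs p, q whose second coordinates straddle the cut) and * is tropical multiplication (real addition). -/
open Tropical

namespace Stmt9Aux

abbrev T := Tropical (WithTop ℝ)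

lemma tsum_le {ι : Type*} {s : Finset ι} {f : ι → T} {i : ι} (h : i ∈ s) :
    ∑ j ∈ s, f j ≤ f i :=
  untrop_le_iff.mp (by rw [Finset.untrop_sum']; exact Finset.inf_le h)

lemma le_tsum {ι : Type*} {s : Finset ι} {f : ι → T} {a : T} (h : ∀ i ∈ s, a ≤ f i) :
    a ≤ ∑ j ∈ s, f j :=
  untrop_le_iff.mp (by
    rw [Finset.untrop_sum']
    exact Finset.le_inf fun i hi => untrop_le_iff.mpr (h i hi))

section

variable {m n : ℕ}
  (H : Matrix (Fin (m+1) × Fin (n+1)) (Fin (m+1) × Fin (n+1)) T)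
  (hdiag : ∀ z, H z z = 1)
  (hoff : ∀ u v : Fin (m+1) × Fin (n+1), u ≠ v →
      ¬(u.1 < v.1 ∧ u.2 < v.2) → H u v = 0)

include hdiag hoff

lemma pow_struct : ∀ (k : ℕ) (u v : Fin (m+1) × Fin (n+1)),
    ¬(u = v ∨ (u.1 < v.1 ∧ u.2 < v.2)) → (H ^ k) u v = 0 := by
  intro k
  induction k with
  | zero =>
    intro u v h
    rw [pow_zero, Matrix.one_apply_ne (fun e => h (Or.inl e))]
  | succ k ih =>
    intro u v h
    rw [pow_succ', Matrix.mul_apply]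
    apply Finset.sum_eq_zero
    intro r _
    by_cases h1 : u = r ∨ (u.1 < r.1 ∧ u.2 < r.2)
    · have hz : (H ^ k) r v = 0 := by
        apply ih
        rintro (rfl | hrv)
        · exact h h1
        · rcases h1 with rfl | huv
          · exact h (Or.inr hrv)
          · exact h (Or.inr ⟨huv.1.trans hrv.1, huv.2.trans hrv.2⟩)
      rw [hz, mul_zero]
    · rw [hoff u r (fun e => h1 (Or.inl e)) (fun e => h1 (Or.inr e)), zero_mul]

lemma pow_diag : ∀ (k : ℕ) (u : Fin (m+1) × Fin (n+1)), (H ^ k) u u = 1 := by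
  intro k
  induction k with
  | zero => intro u; rw [pow_zero, Matrix.one_apply_eq]
  | succ k ih =>
    intro u
    rw [pow_succ', Matrix.mul_apply]
    rw [Finset.sum_eq_single u]
    · rw [hdiag, ih, mul_one]
    · intro b _ hb
      by_cases h1 : u = b ∨ (u.1 < b.1 ∧ u.2 < b.2)
      · have hz : (H ^ k) b u = 0 := by
          apply pow_struct H hdiag hoff
          rintro (rfl | hbu)
          · exact hb rfl
          · rcases h1 with rfl | hub
            · exact hb rfl
            · exact absurd (hub.1.trans hbu.1) (lt_irrefl _)
        rw [hz, mul_zero]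
      · rw [hoff u b (fun e => h1 (Or.inl e)) (fun e => h1 (Or.inr e)), zero_mul]
    · intro h; exact absurd (Finset.mem_univ u) h

lemma pow_succ_le (k : ℕ) (u v : Fin (m+1) × Fin (n+1)) :
    (H ^ (k+1)) u v ≤ (H ^ k) u v := by
  rw [pow_succ', Matrix.mul_apply]
  have h := tsum_le (f := fun r => H u r * (H ^ k) r v) (Finset.mem_univ u)
  simpa only [hdiag, one_mul] using h

lemma pow_le_pow {j k : ℕ} (h : j ≤ k) (u v : Fin (m+1) × Fin (n+1)) :
    (H ^ k) u v ≤ (H ^ j) u v := by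
  induction k, h using Nat.le_induction with
  | base => exact le_refl _
  | succ k hk ih => exact (pow_succ_le H hdiag hoff k u v).trans ih

lemma pow_stab : ∀ (k : ℕ) (u v : Fin (m+1) × Fin (n+1)),
    min (v.1.val - u.1.val) (v.2.val - u.2.val) ≤ k →
    (H ^ (k+1)) u v = (H ^ k) u v := by
  intro k
  induction k with
  | zero =>
    intro u v h
    by_cases huv : u = v
    · subst huv
      rw [pow_one, pow_zero, hdiag, Matrix.one_apply_eq]
    · have hno : ¬(u = v ∨ (u.1 < v.1 ∧ u.2 < v.2)) := by
        rintro (rfl | ⟨h1, h2⟩)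
        · exact huv rfl
        · have h1' : u.1.val < v.1.val := h1
          have h2' : u.2.val < v.2.val := h2
          omega
      rw [pow_struct H hdiag hoff 1 u v hno, pow_struct H hdiag hoff 0 u v hno]
  | succ k ih =>
    intro u v h
    apply le_antisymm (pow_succ_le H hdiag hoff (k+1) u v)
    rw [pow_succ' H (k+1), Matrix.mul_apply]
    apply le_tsum
    intro r _
    by_cases hur : u = r ∨ (u.1 < r.1 ∧ u.2 < r.2)
    · rcases hur with rfl | hlt
      · rw [hdiag, one_mul]
      · have h1 : u.1.val < r.1.val := hlt.1
        have h2 : u.2.val < r.2.val := hlt.2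
        have hr : (H ^ (k+1)) r v = (H ^ k) r v := ih r v (by omega)
        rw [hr, pow_succ' H k, Matrix.mul_apply]
        exact tsum_le (Finset.mem_univ r)
    · rw [hoff u r (fun e => hur (Or.inl e)) (fun e => hur (Or.inr e)), zero_mul]
      exact le_zero _

lemma pow_stab_ge : ∀ (k : ℕ), min m n ≤ k → ∀ (u v : Fin (m+1) × Fin (n+1)),
    (H ^ k) u v = (H ^ (min m n)) u v := by
  intro k hk
  induction k, hk using Nat.le_induction with
  | base => intro u v; rfl
  | succ k hk ih =>
    intro u v
    have h1 : v.1.val ≤ m := Nat.lt_succ_iff.mp v.1.isLt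
    have h2 : v.2.val ≤ n := Nat.lt_succ_iff.mp v.2.isLt
    rw [pow_stab H hdiag hoff k u v (by omega), ih u v]

end

end Stmt9Aux

/-- 2D square decomposition for the closure of a GAP-structured
tropical matrix: with `L = min m n`, for any cut `c` on the second coordinate
and indices `u, v` with `u.2 ≤ c < v.2`,
`(H^L) u v = Σ_{p.2 ≤ c < q.2} (H^L) u p * H p q * (H^L) q v` (tropical sum). -/
theorem stmt9 (m n : ℕ)
    (H : Matrix (Fin (m+1) × Fin (n+1)) (Fin (m+1) × Fin (n+1))
      (Tropical (WithTop ℝ)))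
    (hdiag : ∀ z, H z z = 1)
    (hoff : ∀ u v : Fin (m+1) × Fin (n+1), u ≠ v →
      ¬(u.1 < v.1 ∧ u.2 < v.2) → H u v = 0) :
    ∀ (c : Fin (n+1)) (u v : Fin (m+1) × Fin (n+1)),
      u.2 ≤ c → c < v.2 →
      (H ^ (min m n)) u v =
        ∑ pq ∈ Finset.univ.filter
            (fun pq : (Fin (m+1) × Fin (n+1)) × (Fin (m+1) × Fin (n+1)) =>
              pq.1.2 ≤ c ∧ c < pq.2.2),
          (H ^ (min m n)) u pq.1 * H pq.1 pq.2 * (H ^ (min m n)) pq.2 v := by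
  intro c u v hu hv
  set L := min m n with hL
  open Stmt9Aux in
  -- notation for the cut sum with arbitrary endpoints
  set S : (Fin (m+1) × Fin (n+1)) → (Fin (m+1) × Fin (n+1)) → Stmt9Aux.T :=
    fun a b =>
      ∑ pq ∈ Finset.univ.filter
          (fun pq : (Fin (m+1) × Fin (n+1)) × (Fin (m+1) × Fin (n+1)) =>
            pq.1.2 ≤ c ∧ c < pq.2.2),
        (H ^ L) a pq.1 * H pq.1 pq.2 * (H ^ L) pq.2 b with hS
  show (H ^ L) u v = S u v
  -- shift lemma: (H^L) a p ≤ H a r * (H^L) r p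
  have hshift : ∀ (a r p : Fin (m+1) × Fin (n+1)),
      (H ^ L) a p ≤ H a r * (H ^ L) r p := by
    intro a r p
    have he : (H ^ L) a p = (H * H ^ L) a p := by
      rw [← pow_succ']
      exact (Stmt9Aux.pow_stab_ge H hdiag hoff (L+1) (by omega) a p).symm
    rw [he, Matrix.mul_apply]
    exact Stmt9Aux.tsum_le (Finset.mem_univ r)
  apply le_antisymm
  · -- (H^L) u v ≤ each term of S u v
    apply Stmt9Aux.le_tsum
    intro pq _
    have key : (H ^ L) u v = ((H ^ L * H) * H ^ L) u v := by
      have h1 : (H ^ L * H) * H ^ L = H ^ (L + 1 + L) := by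
        rw [pow_add, pow_succ]
      rw [h1]
      exact (Stmt9Aux.pow_stab_ge H hdiag hoff (L+1+L) (by omega) u v).symm
    rw [key, Matrix.mul_apply]
    calc ∑ q, (H ^ L * H) u q * (H ^ L) q v
        ≤ (H ^ L * H) u pq.2 * (H ^ L) pq.2 v := Stmt9Aux.tsum_le (Finset.mem_univ pq.2)
      _ ≤ ((H ^ L) u pq.1 * H pq.1 pq.2) * (H ^ L) pq.2 v := by
          apply mul_le_mul_left
          rw [Matrix.mul_apply]
          exact Stmt9Aux.tsum_le (Finset.mem_univ pq.1)
  · -- S u v ≤ (H^L) u v , by induction on the power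
    have claim : ∀ (k : ℕ), k ≤ L → ∀ (a b : Fin (m+1) × Fin (n+1)),
        a.2 ≤ c → c < b.2 → S a b ≤ (H ^ k) a b := by
      intro k
      induction k with
      | zero =>
        intro _ a b ha hb
        have hne : a ≠ b := by
          intro e
          exact absurd (e ▸ lt_of_le_of_lt ha hb) (lt_irrefl _)
        rw [pow_zero, Matrix.one_apply_ne hne]
        exact le_zero _
      | succ k ih =>
        intro hk a b ha hb
        rw [pow_succ', Matrix.mul_apply]
        apply Stmt9Aux.le_tsum
        intro r _
        by_cases har : a = r ∨ (a.1 < r.1 ∧ a.2 < r.2)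
        · rcases har with rfl | hlt
          · rw [hdiag, one_mul]
            exact ih (Nat.le_of_succ_le hk) a b ha hb
          · by_cases hrc : c < r.2
            · have hmem : (a, r) ∈ Finset.univ.filter
                  (fun pq : (Fin (m+1) × Fin (n+1)) × (Fin (m+1) × Fin (n+1)) =>
                    pq.1.2 ≤ c ∧ c < pq.2.2) :=
                Finset.mem_filter.mpr ⟨Finset.mem_univ _, ha, hrc⟩
              have h1 : S a b ≤ (H ^ L) a a * H a r * (H ^ L) r b :=
                Stmt9Aux.tsum_le hmem
              rw [Stmt9Aux.pow_diag H hdiag hoff L a, one_mul] at h1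
              exact h1.trans (mul_le_mul_right
                (Stmt9Aux.pow_le_pow H hdiag hoff (Nat.le_of_succ_le hk) r b) _)
            · push_neg at hrc
              have hIH : S r b ≤ (H ^ k) r b := ih (Nat.le_of_succ_le hk) r b hrc hb
              have h2 : S a b ≤ H a r * S r b := by
                rw [hS, Finset.mul_sum]
                apply Stmt9Aux.le_tsum
                intro pq hpq
                have h1 : S a b ≤ (H ^ L) a pq.1 * H pq.1 pq.2 * (H ^ L) pq.2 b :=
                  Stmt9Aux.tsum_le hpq
                refine h1.trans ?_
                calc (H ^ L) a pq.1 * H pq.1 pq.2 * (H ^ L) pq.2 b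
                    ≤ (H a r * (H ^ L) r pq.1) * H pq.1 pq.2 * (H ^ L) pq.2 b := by
                      exact mul_le_mul_left (mul_le_mul_left (hshift a r pq.1) _) _
                  _ = H a r * ((H ^ L) r pq.1 * H pq.1 pq.2 * (H ^ L) pq.2 b) := by
                      ring
              exact h2.trans (mul_le_mul_right hIH _)
        · rw [hoff a r (fun e => har (Or.inl e)) (fun e => har (Or.inr e)), zero_mul]
          exact le_zero _
    exact claim L (le_refl L) u v hu hv
end
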